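/- Let p be a prime and let m ≥ 1, r be integers with 0 ≤ r ≤ m(p−1), and suppose d_RM(r,m) ≥ 2. Then for every point s ∈ 𝔽_p^m, the minimum over all nonzero reduced polynomials f ∈ 𝔽_p[x_1,…,x_m] of total degree at most r of #{v ∈ 𝔽_p^m : v ≠ s and f(v) ≠ 0} equals d_RM(r,m) − 1. In particular this minimum (the distance of the once-punctured Reed–Muller code) is independent of the puncture location s. -/

import Mathlib

open MvPolynomial Finset

/-- The Reed–Muller distance function. -/
def rmD (p r m : ℕ) : ℕ :=
  if m * (p - 1) ≤ r then 1 else (p - r % (p - 1)) * p ^ (m - r / (p - 1) - 1)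

lemma rmD_of_le {p r m : ℕ} (h : m * (p - 1) ≤ r) : rmD p r m = 1 := by
  simp [rmD, h]

lemma rmD_of_lt {p r m : ℕ} (h : ¬ m * (p - 1) ≤ r) :
    rmD p r m = (p - r % (p - 1)) * p ^ (m - r / (p - 1) - 1) := by
  simp [rmD, h]

lemma rmD_pos (p r m : ℕ) (hp : 2 ≤ p) : 0 < rmD p r m := by
  by_cases h : m * (p - 1) ≤ r
  · rw [rmD_of_le h]; norm_num
  · rw [rmD_of_lt h]
    have h1 : r % (p - 1) < p - 1 := Nat.mod_lt _ (by omega)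
    exact Nat.mul_pos (by omega) (pow_pos (by omega) _)

lemma rmD_antitone (p m : ℕ) (hp : 2 ≤ p) {r r' : ℕ} (h : r ≤ r') :
    rmD p r' m ≤ rmD p r m := by
  by_cases h2 : m * (p - 1) ≤ r'
  · rw [rmD_of_le h2]; exact rmD_pos p r m hp
  · have h3 : ¬ m * (p - 1) ≤ r := fun hc => h2 (le_trans hc h)
    rw [rmD_of_lt h2, rmD_of_lt h3]
    have hp1 : 0 < p - 1 := by omega
    have hdm : (p - 1) * (r / (p - 1)) + r % (p - 1) = r := Nat.div_add_mod r (p - 1)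
    have hdm' : (p - 1) * (r' / (p - 1)) + r' % (p - 1) = r' := Nat.div_add_mod r' (p - 1)
    have hmod : r % (p - 1) < p - 1 := Nat.mod_lt _ hp1
    have hmod' : r' % (p - 1) < p - 1 := Nat.mod_lt _ hp1
    have hale : r / (p - 1) ≤ r' / (p - 1) := Nat.div_le_div_right h
    have ha'm : r' / (p - 1) < m := (Nat.div_lt_iff_lt_mul hp1).2 (by omega)
    rcases eq_or_lt_of_le hale with heq | hlt
    · have hcc : (p - 1) * (r / (p - 1)) = (p - 1) * (r' / (p - 1)) := by rw [heq]
      rw [← heq]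
      exact Nat.mul_le_mul_right _ (by omega)
    · calc (p - r' % (p - 1)) * p ^ (m - r' / (p - 1) - 1)
          ≤ p * p ^ (m - r' / (p - 1) - 1) := Nat.mul_le_mul_right _ (by omega)
        _ = p ^ (m - r' / (p - 1)) := by
            rw [← pow_succ']; congr 1; omega
        _ ≤ p ^ (m - r / (p - 1) - 1) := Nat.pow_le_pow_right (by omega) (by omega)
        _ ≤ (p - r % (p - 1)) * p ^ (m - r / (p - 1) - 1) :=
            Nat.le_mul_of_pos_left _ (by omega)

lemma rmD_step (p n t r : ℕ) (hp : 2 ≤ p) (ht : t ≤ p - 1) (htr : t ≤ r) :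
    rmD p r (n + 1) ≤ (p - t) * rmD p (r - t) n := by
  by_cases h2 : (n + 1) * (p - 1) ≤ r
  · rw [rmD_of_le h2]
    calc 1 ≤ 1 * 1 := by norm_num
      _ ≤ (p - t) * rmD p (r - t) n := Nat.mul_le_mul (by omega) (rmD_pos p (r - t) n hp)
  · have hp1 : 0 < p - 1 := by omega
    set a := r / (p - 1) with hadef
    set b := r % (p - 1) with hbdef
    have hdm : (p - 1) * a + b = r := Nat.div_add_mod r (p - 1)
    have hmod : b < p - 1 := Nat.mod_lt _ hp1
    have han : a ≤ n := by
      have : a < n + 1 := (Nat.div_lt_iff_lt_mul hp1).2 (by omega)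
      omega
    rw [rmD_of_lt h2]
    have hm1 : (n + 1) - a - 1 = n - a := by omega
    rw [hm1]
    by_cases hTB : t ≤ b
    · have hq : (r - t) / (p - 1) = a ∧ (r - t) % (p - 1) = b - t :=
        (Nat.div_mod_unique hp1).2 (by constructor <;> omega)
      rcases eq_or_lt_of_le han with heq | hlt
      · have hmm : (p - 1) * a = n * (p - 1) := by rw [heq, mul_comm]
        have hle : n * (p - 1) ≤ r - t := by omega
        rw [rmD_of_le hle, mul_one]
        have hz : n - a = 0 := by omega
        rw [hz, pow_zero, mul_one]
        omega
      · have hne : ¬ n * (p - 1) ≤ r - t := by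
          have e1 : (a + 1) * (p - 1) = (p - 1) * a + (p - 1) := by ring
          have e2 : (a + 1) * (p - 1) ≤ n * (p - 1) := Nat.mul_le_mul_right _ (by omega)
          omega
        rw [rmD_of_lt hne, hq.1, hq.2]
        have hpow : p ^ (n - a) = p * p ^ (n - a - 1) := by
          rw [← pow_succ']; congr 1; omega
        rw [hpow, ← mul_assoc, ← mul_assoc]
        refine Nat.mul_le_mul_right _ ?_
        obtain ⟨u, w, hz, hu, hw⟩ : ∃ u w, p = t + u + w ∧ b = t + u ∧ p - b = w :=
          ⟨b - t, p - b, by omega, by omega, by omega⟩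
        have e1 : p - b = w := hw
        have e2 : p - t = u + w := by omega
        have e3 : p - (b - t) = t + w := by omega
        rw [e1, e2, e3]
        have e6 : (u + w) * (t + w) = w * (t + u + w) + u * t := by ring
        have e7 : w * p = w * (t + u + w) := by rw [← hz]
        omega
    · have hrp : p - 1 ≤ r := by
        by_contra hc
        have hbr : r % (p - 1) = r := Nat.mod_eq_of_lt (by omega)
        omega
      have ha1 : 1 ≤ a := by
        rw [hadef]
        exact (Nat.one_le_div_iff hp1).2 hrp
      have hsplitmul : (p - 1) * a = (p - 1) * (a - 1) + (p - 1) := by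
        have h7 : a - 1 + 1 = a := by omega
        calc (p - 1) * a = (p - 1) * (a - 1 + 1) := by rw [h7]
          _ = (p - 1) * (a - 1) + (p - 1) := by ring
      have hq : (r - t) / (p - 1) = a - 1 ∧ (r - t) % (p - 1) = p - 1 - (t - b) :=
        (Nat.div_mod_unique hp1).2 (by constructor <;> omega)
      have hne : ¬ n * (p - 1) ≤ r - t := by
        have e2 : a * (p - 1) ≤ n * (p - 1) := Nat.mul_le_mul_right _ han
        have e3 : a * (p - 1) = (p - 1) * a := mul_comm _ _
        omega
      rw [rmD_of_lt hne, hq.1, hq.2]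
      have hexp : n - (a - 1) - 1 = n - a := by omega
      rw [hexp, ← mul_assoc]
      refine Nat.mul_le_mul_right _ ?_
      have h6 : p - (p - 1 - (t - b)) = t - b + 1 := by omega
      rw [h6]
      obtain ⟨z, hzz⟩ : ∃ z, p - t = z + 1 := ⟨p - t - 1, by omega⟩
      obtain ⟨w, hww⟩ : ∃ w, t - b = w + 1 := ⟨t - b - 1, by omega⟩
      have e5 : p - b = (p - t) + (t - b) := by omega
      rw [e5, hzz, hww]
      have h8 : (z + 1) * (w + 1 + 1) = (z + 1) * (w + 1) + (z + 1) := by ring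
      have h9 : w + 1 ≤ (z + 1) * (w + 1) := Nat.le_mul_of_pos_left _ (by omega)
      omega

lemma one_sub_pow_ne_zero_iff (p : ℕ) [Fact p.Prime] (x : ZMod p) :
    (1 : ZMod p) - x ^ (p - 1) ≠ 0 ↔ x = 0 := by
  have hp2 : 2 ≤ p := (Fact.out : p.Prime).two_le
  constructor
  · intro h
    by_contra hx
    rw [ZMod.pow_card_sub_one_eq_one hx, sub_self] at h
    exact h rfl
  · intro h
    rw [h, zero_pow (by omega : p - 1 ≠ 0), sub_zero]
    exact one_ne_zero

lemma rm_upper (p m a b : ℕ) [Fact p.Prime] (ham : a < m) (hb : b ≤ p - 2)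
    (s : Fin m → ZMod p) :
    ∃ f : MvPolynomial (Fin m) (ZMod p), f ≠ 0 ∧ (∀ i, f.degreeOf i ≤ p - 1) ∧
      f.totalDegree ≤ a * (p - 1) + b ∧ MvPolynomial.eval s f ≠ 0 ∧
      (Finset.univ.filter fun v : Fin m → ZMod p => MvPolynomial.eval v f ≠ 0).card
        = (p - b) * p ^ (m - a - 1) := by
  have hp2 : 2 ≤ p := (Fact.out : p.Prime).two_le
  set am : Fin m := ⟨a, ham⟩ with ham'
  set A : Finset (Fin m) := Finset.univ.filter (fun i : Fin m => (i : ℕ) < a) with hA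
  set P1 : MvPolynomial (Fin m) (ZMod p) :=
    ∏ i ∈ A, (1 - (X i - C (s i)) ^ (p - 1)) with hP1
  set P2 : MvPolynomial (Fin m) (ZMod p) :=
    ∏ j ∈ Finset.range b, (X am - C (s am) - C ((j + 1 : ℕ) : ZMod p)) with hP2
  have heval : ∀ v : Fin m → ZMod p, MvPolynomial.eval v (P1 * P2) =
      (∏ i ∈ A, ((1 : ZMod p) - (v i - s i) ^ (p - 1))) *
      (∏ j ∈ Finset.range b, (v am - s am - ((j + 1 : ℕ) : ZMod p))) := by
    intro v
    rw [hP1, hP2]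
    simp only [map_mul, map_prod, map_sub, map_pow, map_one, eval_X, eval_C]
  -- nonzero criterion
  have hne : ∀ v : Fin m → ZMod p, MvPolynomial.eval v (P1 * P2) ≠ 0 ↔
      ((∀ i ∈ A, v i = s i) ∧
       ∀ j ∈ Finset.range b, v am ≠ s am + ((j + 1 : ℕ) : ZMod p)) := by
    intro v
    rw [heval v, mul_ne_zero_iff, Finset.prod_ne_zero_iff, Finset.prod_ne_zero_iff]
    constructor
    · rintro ⟨h1, h2⟩
      refine ⟨fun i hi => ?_, fun j hj hc => ?_⟩
      · exact sub_eq_zero.mp ((one_sub_pow_ne_zero_iff p _).mp (h1 i hi))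
      · exact h2 j hj (by rw [hc]; ring)
    · rintro ⟨h1, h2⟩
      refine ⟨fun i hi => ?_, fun j hj hc => ?_⟩
      · exact (one_sub_pow_ne_zero_iff p _).mpr (sub_eq_zero.mpr (h1 i hi))
      · exact h2 j hj (by rw [← sub_eq_zero]; rw [← hc]; ring)
  -- eval at s is nonzero
  have hs : MvPolynomial.eval s (P1 * P2) ≠ 0 := by
    rw [hne s]
    refine ⟨fun i _ => rfl, fun j hj hc => ?_⟩
    rw [Finset.mem_range] at hj
    have hc' : ((j + 1 : ℕ) : ZMod p) = 0 := by
      have := hc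
      rw [left_eq_add] at this
      exact this
    have := congrArg ZMod.val hc'
    rw [ZMod.val_cast_of_lt (by omega : j + 1 < p), ZMod.val_zero] at this
    omega
  have hf0 : P1 * P2 ≠ 0 := fun h0 => hs (by rw [h0, map_zero])
  -- the count
  classical
  set T : Fin m → Finset (ZMod p) := fun i =>
    if (i : ℕ) < a then {s i}
    else if i = am then
      Finset.univ \ (Finset.range b).image (fun j => s am + ((j + 1 : ℕ) : ZMod p))
    else Finset.univ with hT
  have hamA : ¬ ((am : ℕ) < a) := by simp [ham']
  have hTfilter : (Finset.univ.filter
      fun v : Fin m → ZMod p => MvPolynomial.eval v (P1 * P2) ≠ 0) = Fintype.piFinset T := by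
    ext v
    simp only [mem_filter, mem_univ, true_and, Fintype.mem_piFinset]
    rw [hne v]
    constructor
    · rintro ⟨h1, h2⟩ i
      by_cases h : (i : ℕ) < a
      · simp only [hT]
        rw [if_pos h, Finset.mem_singleton]
        exact h1 i (by simp [hA, h])
      · by_cases h' : i = am
        · rw [h']
          simp only [hT]
          rw [if_neg hamA, if_true, Finset.mem_sdiff]
          refine ⟨Finset.mem_univ _, fun hc => ?_⟩
          rw [Finset.mem_image] at hc
          obtain ⟨j, hj, hje⟩ := hc
          exact h2 j hj hje.symm
        · simp only [hT]
          rw [if_neg h, if_neg h']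
          exact Finset.mem_univ _
    · intro hTv
      constructor
      · intro i hi
        have h : (i : ℕ) < a := by simpa [hA] using hi
        have hTvi := hTv i
        simp only [hT] at hTvi
        rw [if_pos h, Finset.mem_singleton] at hTvi
        exact hTvi
      · intro j hj hc
        have hTva := hTv am
        simp only [hT] at hTva
        rw [if_neg hamA, if_true, Finset.mem_sdiff] at hTva
        exact hTva.2 (Finset.mem_image.mpr ⟨j, hj, hc.symm⟩)
  have hinj : Set.InjOn (fun j : ℕ => s am + ((j + 1 : ℕ) : ZMod p)) (Finset.range b) := by
    intro j hj k hk hjk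
    simp only [Finset.coe_range, Set.mem_Iio] at hj hk
    have h1 : ((j + 1 : ℕ) : ZMod p) = ((k + 1 : ℕ) : ZMod p) := add_left_cancel hjk
    have h2 := congrArg ZMod.val h1
    rw [ZMod.val_cast_of_lt (by omega : j + 1 < p),
      ZMod.val_cast_of_lt (by omega : k + 1 < p)] at h2
    omega
  set c : ℕ → ℕ := fun k => if k < a then 1 else if k = a then p - b else p with hcdef
  have hcardT : ∀ i : Fin m, (T i).card = c (i : ℕ) := by
    intro i
    simp only [hT, hcdef]
    by_cases h : (i : ℕ) < a
    · rw [if_pos h, if_pos h, Finset.card_singleton]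
    · by_cases h' : i = am
      · have h'' : (i : ℕ) = a := by rw [h', ham']
        rw [if_neg h, if_pos h', if_neg h, if_pos h'']
        rw [Finset.card_sdiff_of_subset (Finset.subset_univ _), Finset.card_univ, ZMod.card,
          Finset.card_image_of_injOn hinj, Finset.card_range]
      · have h'' : ¬ ((i : ℕ) = a) := fun hc => h' (Fin.ext (by rw [hc, ham']))
        rw [if_neg h, if_neg h', if_neg h, if_neg h'']
        rw [Finset.card_univ, ZMod.card]
  have hma : a + (m - a) = m := by omega
  have hma2 : 1 + (m - a - 1) = m - a := by omega
  have hcount : (Finset.univ.filter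
      fun v : Fin m → ZMod p => MvPolynomial.eval v (P1 * P2) ≠ 0).card
      = (p - b) * p ^ (m - a - 1) := by
    rw [hTfilter, Fintype.card_piFinset]
    calc ∏ i : Fin m, (T i).card
        = ∏ i : Fin m, c (i : ℕ) := Finset.prod_congr rfl fun i _ => hcardT i
      _ = ∏ k ∈ Finset.range m, c k := Fin.prod_univ_eq_prod_range c m
      _ = (p - b) * p ^ (m - a - 1) := by
          have h1 := Finset.prod_range_add c a (m - a)
          rw [hma] at h1
          have h2 : (∏ k ∈ Finset.range a, c k) = 1 :=
            Finset.prod_eq_one fun k hk => by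
              simp only [hcdef]
              exact if_pos (Finset.mem_range.mp hk)
          have h4 := Finset.prod_range_add (fun k => c (a + k)) 1 (m - a - 1)
          rw [hma2] at h4
          have h5 : (∏ k ∈ Finset.range 1, c (a + k)) = p - b := by
            rw [Finset.prod_range_one]
            simp only [hcdef]
            rw [if_neg (by omega), if_pos (by omega)]
          have h6 : (∏ k ∈ Finset.range (m - a - 1), c (a + (1 + k))) = p ^ (m - a - 1) := by
            rw [Finset.prod_congr rfl (fun k _ => ?_), Finset.prod_const, Finset.card_range]
            simp only [hcdef]
            rw [if_neg (by omega), if_neg (by omega)]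
          rw [h1, h2, h4, h5, h6, one_mul]
  -- degree bounds
  have hcardA : A.card ≤ a := by
    have h := Finset.card_le_card_of_injOn (s := A) (t := Finset.range a) (fun i : Fin m => (i : ℕ))
      (fun i hi => Finset.mem_range.mpr (by rw [Finset.mem_coe, hA, Finset.mem_filter] at hi; exact hi.2))
      (Set.injOn_of_injective Fin.val_injective)
    simpa using h
  have htd1 : P1.totalDegree ≤ a * (p - 1) := by
    rw [hP1]
    calc (∏ i ∈ A, ((1 : MvPolynomial (Fin m) (ZMod p)) - (X i - C (s i)) ^ (p - 1))).totalDegree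
        ≤ ∑ i ∈ A, ((1 : MvPolynomial (Fin m) (ZMod p)) - (X i - C (s i)) ^ (p - 1)).totalDegree :=
          totalDegree_finset_prod _ _
      _ ≤ ∑ _i ∈ A, (p - 1) := by
          refine Finset.sum_le_sum fun i _ => ?_
          refine le_trans (totalDegree_sub _ _) (max_le (by rw [totalDegree_one]; omega) ?_)
          refine le_trans (totalDegree_pow _ _) ?_
          have hQ : (X i - C (s i) : MvPolynomial (Fin m) (ZMod p)).totalDegree ≤ 1 :=
            le_trans (totalDegree_sub _ _)
              (max_le (le_of_eq (totalDegree_X _)) (by rw [totalDegree_C]; omega))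
          calc (p - 1) * (X i - C (s i) : MvPolynomial (Fin m) (ZMod p)).totalDegree
              ≤ (p - 1) * 1 := Nat.mul_le_mul_left _ hQ
            _ = p - 1 := mul_one _
      _ = A.card * (p - 1) := by rw [Finset.sum_const, smul_eq_mul]
      _ ≤ a * (p - 1) := Nat.mul_le_mul_right _ hcardA
  have htd2 : P2.totalDegree ≤ b := by
    rw [hP2]
    calc (∏ j ∈ Finset.range b,
          (X am - C (s am) - C ((j + 1 : ℕ) : ZMod p))).totalDegree
        ≤ ∑ j ∈ Finset.range b,
            (X am - C (s am) - C ((j + 1 : ℕ) : ZMod p) :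
              MvPolynomial (Fin m) (ZMod p)).totalDegree := totalDegree_finset_prod _ _
      _ ≤ ∑ _j ∈ Finset.range b, 1 := by
          refine Finset.sum_le_sum fun j _ => ?_
          refine le_trans (totalDegree_sub _ _) (max_le ?_ (by rw [totalDegree_C]; omega))
          exact le_trans (totalDegree_sub _ _)
            (max_le (le_of_eq (totalDegree_X _)) (by rw [totalDegree_C]; omega))
      _ = b := by rw [Finset.sum_const, Finset.card_range, smul_eq_mul, mul_one]
  have hdeg1 : ∀ k : Fin m, P1.degreeOf k ≤ if (k : ℕ) < a then p - 1 else 0 := by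
    intro k
    rw [hP1]
    calc (∏ i ∈ A, ((1 : MvPolynomial (Fin m) (ZMod p)) - (X i - C (s i)) ^ (p - 1))).degreeOf k
        ≤ ∑ i ∈ A, ((1 : MvPolynomial (Fin m) (ZMod p)) - (X i - C (s i)) ^ (p - 1)).degreeOf k :=
          degreeOf_prod_le _ _ _
      _ ≤ ∑ i ∈ A, (if i = k then p - 1 else 0) := by
          refine Finset.sum_le_sum fun i _ => ?_
          refine le_trans (degreeOf_sub_le _ _ _) (max_le ?_ ?_)
          · rw [show (1 : MvPolynomial (Fin m) (ZMod p)) = C 1 from (C_1).symm, degreeOf_C]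
            omega
          · refine le_trans (degreeOf_pow_le _ _ _) ?_
            have hXC : (X i - C (s i) : MvPolynomial (Fin m) (ZMod p)).degreeOf k
                ≤ if k = i then 1 else 0 := by
              refine le_trans (degreeOf_sub_le _ _ _) ?_
              rw [degreeOf_X, degreeOf_C]
              omega
            by_cases hik : i = k
            · subst hik
              simp only [if_pos rfl] at hXC ⊢
              calc (p - 1) * (X i - C (s i) : MvPolynomial (Fin m) (ZMod p)).degreeOf i
                  ≤ (p - 1) * 1 := Nat.mul_le_mul_left _ (by simpa using hXC)
                _ = p - 1 := mul_one _
            · have hki : ¬ (k = i) := fun hc => hik hc.symm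
              rw [if_neg hki] at hXC
              rw [if_neg hik]
              calc (p - 1) * (X i - C (s i) : MvPolynomial (Fin m) (ZMod p)).degreeOf k
                  ≤ (p - 1) * 0 := Nat.mul_le_mul_left _ hXC
                _ = 0 := mul_zero _
      _ = if k ∈ A then p - 1 else 0 := Finset.sum_ite_eq' A k (fun _ => p - 1)
      _ ≤ if (k : ℕ) < a then p - 1 else 0 := by
          by_cases h : (k : ℕ) < a
          · have : k ∈ A := by simp [hA, h]
            rw [if_pos this, if_pos h]
          · have : k ∉ A := by simp [hA, h]
            rw [if_neg this, if_neg h]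
  have hdeg2 : ∀ k : Fin m, P2.degreeOf k ≤ if k = am then b else 0 := by
    intro k
    rw [hP2]
    calc (∏ j ∈ Finset.range b,
          (X am - C (s am) - C ((j + 1 : ℕ) : ZMod p))).degreeOf k
        ≤ ∑ j ∈ Finset.range b,
            (X am - C (s am) - C ((j + 1 : ℕ) : ZMod p) :
              MvPolynomial (Fin m) (ZMod p)).degreeOf k := degreeOf_prod_le _ _ _
      _ ≤ ∑ _j ∈ Finset.range b, (if k = am then 1 else 0) := by
          refine Finset.sum_le_sum fun j _ => ?_
          refine le_trans (degreeOf_sub_le _ _ _) (max_le ?_ (by rw [degreeOf_C]; omega))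
          refine le_trans (degreeOf_sub_le _ _ _) (max_le ?_ (by rw [degreeOf_C]; omega))
          rw [degreeOf_X]
      _ = b * (if k = am then 1 else 0) := by
          rw [Finset.sum_const, Finset.card_range, smul_eq_mul]
      _ ≤ if k = am then b else 0 := by
          by_cases h : k = am <;> simp [h]
  have hdeg : ∀ k : Fin m, (P1 * P2).degreeOf k ≤ p - 1 := by
    intro k
    have h12 := le_trans (degreeOf_mul_le k P1 P2) (add_le_add (hdeg1 k) (hdeg2 k))
    refine le_trans h12 ?_
    by_cases h : (k : ℕ) < a
    · have hk : ¬ (k = am) := fun hc => by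
        rw [hc] at h
        exact hamA h
      rw [if_pos h, if_neg hk]
      omega
    · by_cases hk : k = am
      · rw [if_neg h, if_pos hk]
        omega
      · rw [if_neg h, if_neg hk]
        omega
  exact ⟨P1 * P2, hf0, hdeg,
    le_trans (totalDegree_mul _ _) (add_le_add htd1 htd2), hs, hcount⟩


theorem rm_lower (p : ℕ) [hp : Fact p.Prime] :
    ∀ (n : ℕ) (f : MvPolynomial (Fin n) (ZMod p)), f ≠ 0 →
      (∀ i, f.degreeOf i ≤ p - 1) →
      rmD p f.totalDegree n ≤
        (Finset.univ.filter fun v : Fin n → ZMod p => MvPolynomial.eval v f ≠ 0).card := by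
  have hp2 : 2 ≤ p := hp.out.two_le
  intro n
  induction n with
  | zero =>
    intro f hf _
    rw [rmD_of_le (by simp)]
    have h1 : (Finset.univ : Finset (Fin 0 → ZMod p)).Nonempty := univ_nonempty
    obtain ⟨v, -⟩ := h1
    have hev : MvPolynomial.eval v f ≠ 0 := by
      rw [eq_C_of_isEmpty f]
      simp only [eval_C]
      intro hc
      apply hf
      rw [eq_C_of_isEmpty f, hc, map_zero]
    refine Finset.card_pos.2 ⟨v, ?_⟩
    simp only [mem_filter, mem_univ, true_and]
    exact hev
  | succ n ih =>
    intro f hf hred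
    set F := finSuccEquiv (ZMod p) n f with hF
    have hF0 : F ≠ 0 := by
      rw [hF, ne_eq, EmbeddingLike.map_eq_zero_iff]
      exact hf
    set t := F.natDegree with htdef
    have htd : t = f.degreeOf 0 := natDegree_finSuccEquiv f
    have ht : t ≤ p - 1 := htd ▸ hred 0
    set g := F.leadingCoeff with hgdef
    have hg0 : g ≠ 0 := Polynomial.leadingCoeff_ne_zero.mpr hF0
    have hgc : g = F.coeff t := rfl
    have hgred : ∀ j, g.degreeOf j ≤ p - 1 := fun j =>
      le_trans (hgc ▸ degreeOf_coeff_finSuccEquiv f j t) (hred j.succ)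
    have hgtot : g.totalDegree + t ≤ f.totalDegree := by
      rw [hgc]
      exact totalDegree_coeff_finSuccEquiv_add_le f t (hgc ▸ hg0)
    have htle : t ≤ f.totalDegree := htd ▸ degreeOf_le_totalDegree f 0
    -- per-fiber bound
    have key : ∀ w : Fin n → ZMod p, MvPolynomial.eval w g ≠ 0 →
        p - t ≤ (Finset.univ.filter
          fun x : ZMod p => MvPolynomial.eval (Fin.cons x w) f ≠ 0).card := by
      intro w hw
      set q : Polynomial (ZMod p) := F.map (MvPolynomial.eval w) with hq
      have hqe : ∀ x : ZMod p, MvPolynomial.eval (Fin.cons x w) f = q.eval x := fun x =>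
        eval_eq_eval_mv_eval' w x f
      have hqc : q.coeff t ≠ 0 := by
        rw [hq, Polynomial.coeff_map]
        exact hw
      have hq0 : q ≠ 0 := fun h => hqc (by simp [h])
      have hdeg : q.natDegree ≤ t := Polynomial.natDegree_map_le
      have hz : (Finset.univ.filter fun x : ZMod p => q.eval x = 0).card ≤ t := by
        have hsub : (Finset.univ.filter fun x : ZMod p => q.eval x = 0) ⊆ q.roots.toFinset := by
          intro x hx
          simp only [mem_filter, mem_univ, true_and] at hx
          simp [Multiset.mem_toFinset, Polynomial.mem_roots, hq0, Polynomial.IsRoot, hx]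
        calc (Finset.univ.filter fun x : ZMod p => q.eval x = 0).card
            ≤ q.roots.toFinset.card := Finset.card_le_card hsub
          _ ≤ Multiset.card q.roots := Multiset.toFinset_card_le _
          _ ≤ q.natDegree := Polynomial.card_roots' q
          _ ≤ t := hdeg
      have hcard : (Finset.univ.filter fun x : ZMod p => q.eval x = 0).card
          + (Finset.univ.filter fun x : ZMod p => ¬ q.eval x = 0).card
          = Fintype.card (ZMod p) := by
        rw [Finset.card_filter_add_card_filter_not, Finset.card_univ]
      have hcz : Fintype.card (ZMod p) = p := ZMod.card p
      have heq : (Finset.univ.filter fun x : ZMod p =>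
          MvPolynomial.eval (Fin.cons x w) f ≠ 0)
          = (Finset.univ.filter fun x : ZMod p => ¬ q.eval x = 0) := by
        refine Finset.filter_congr fun x _ => ?_
        rw [hqe x]
      rw [heq]
      omega
    -- split the count fiberwise
    have hsplit : (Finset.univ.filter
          fun v : Fin (n+1) → ZMod p => MvPolynomial.eval v f ≠ 0).card
        = ∑ w : Fin n → ZMod p, (Finset.univ.filter
            fun x : ZMod p => MvPolynomial.eval (Fin.cons x w) f ≠ 0).card := by
      rw [Finset.card_eq_sum_card_fiberwise
        (f := fun (v : Fin (n+1) → ZMod p) (i : Fin n) => v i.succ)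
        (t := Finset.univ) (fun x _ => Finset.mem_univ _)]
      refine Finset.sum_congr rfl fun w _ => ?_
      refine Finset.card_nbij' (fun v : Fin (n+1) → ZMod p => v 0)
        (fun x => (Fin.cons x w : Fin (n+1) → ZMod p)) ?_ ?_ ?_ ?_
      · intro v hv
        simp only [Finset.mem_coe, mem_filter, mem_univ, true_and] at hv ⊢
        have hv2 : (fun i : Fin n => v i.succ) = w := hv.2
        have hcv : (Fin.cons (v 0) w : Fin (n+1) → ZMod p) = v := by
          rw [← hv2]
          exact funext (Fin.cases rfl (fun i => by simp))
        rw [hcv]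
        exact hv.1
      · intro x hx
        simp only [Finset.mem_coe, mem_filter, mem_univ, true_and] at hx ⊢
        exact ⟨hx, funext fun i => by simp⟩
      · intro v hv
        simp only [Finset.mem_coe, mem_filter, mem_univ, true_and] at hv
        have hv2 : (fun i : Fin n => v i.succ) = w := hv.2
        rw [← hv2]
        exact funext (Fin.cases rfl (fun i => by simp))
      · intro x hx
        simp
    rw [hsplit]
    calc rmD p f.totalDegree (n+1)
        ≤ (p - t) * rmD p (f.totalDegree - t) n := rmD_step p n t _ hp2 ht htle
      _ ≤ (p - t) * rmD p g.totalDegree n :=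
          Nat.mul_le_mul_left _ (rmD_antitone p n hp2 (by omega))
      _ ≤ (p - t) * (Finset.univ.filter
            fun w : Fin n → ZMod p => MvPolynomial.eval w g ≠ 0).card :=
          Nat.mul_le_mul_left _ (ih g hg0 hgred)
      _ = (Finset.univ.filter
            fun w : Fin n → ZMod p => MvPolynomial.eval w g ≠ 0).card * (p - t) := mul_comm _ _
      _ ≤ ∑ w ∈ Finset.univ.filter (fun w : Fin n → ZMod p => MvPolynomial.eval w g ≠ 0),
            (Finset.univ.filter
              fun x : ZMod p => MvPolynomial.eval (Fin.cons x w) f ≠ 0).card := by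
          rw [← smul_eq_mul]
          exact Finset.card_nsmul_le_sum _ _ _ (fun w hw => key w (by
            simpa only [mem_filter, mem_univ, true_and] using hw))
      _ ≤ ∑ w : Fin n → ZMod p, (Finset.univ.filter
            fun x : ZMod p => MvPolynomial.eval (Fin.cons x w) f ≠ 0).card :=
          Finset.sum_le_sum_of_subset (Finset.filter_subset _ _)

/-- Let `0 ≤ r ≤ m(p−1)`, write `r = a(p−1)+b` with
`0 ≤ b ≤ p−2`, and let `d = d_RM(r,m)` be the natural number with
`p·d = (p−b)·p^{m−a}`; suppose `d ≥ 2`.  Then for every puncture location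
`s ∈ 𝔽_p^m`, the minimum over all nonzero reduced polynomials `f` of total
degree at most `r` of `#{v : v ≠ s ∧ f(v) ≠ 0}` equals `d − 1`. -/
theorem once_punctured_reedMuller_distance (p m r a b d : ℕ) [Fact p.Prime]
    (hm : 1 ≤ m) (hr : r ≤ m * (p - 1))
    (hab : r = a * (p - 1) + b) (hb : b ≤ p - 2)
    (hd : p * d = (p - b) * p ^ (m - a)) (hd2 : 2 ≤ d)
    (s : Fin m → ZMod p) :
    IsLeast {n : ℕ | ∃ f : MvPolynomial (Fin m) (ZMod p), f ≠ 0 ∧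
      (∀ i, f.degreeOf i ≤ p - 1) ∧ f.totalDegree ≤ r ∧
      n = (Finset.univ.filter
        fun v : Fin m → ZMod p => v ≠ s ∧ MvPolynomial.eval v f ≠ 0).card}
      (d - 1) := by
  have hp2 : 2 ≤ p := (Fact.out : p.Prime).two_le
  have hp1 : 0 < p - 1 := by omega
  have hcomm : a * (p - 1) = (p - 1) * a := mul_comm _ _
  have hdiv : r / (p - 1) = a ∧ r % (p - 1) = b :=
    (Nat.div_mod_unique hp1).2 (by constructor <;> omega)
  have ham : a < m := by
    by_contra hc
    have h0 : m - a = 0 := by omega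
    rw [h0, pow_zero, mul_one] at hd
    have h1 : p * 2 ≤ p * d := Nat.mul_le_mul_left p hd2
    omega
  have hdd : d = (p - b) * p ^ (m - a - 1) := by
    have hpow : p ^ (m - a) = p * p ^ (m - a - 1) := by
      rw [← pow_succ']; congr 1; omega
    rw [hpow] at hd
    have h2 : p * d = p * ((p - b) * p ^ (m - a - 1)) := by rw [hd]; ring
    exact Nat.eq_of_mul_eq_mul_left (by omega) h2
  have hrlt : ¬ (m * (p - 1) ≤ r) := by
    have h1 : (a + 1) * (p - 1) ≤ m * (p - 1) := Nat.mul_le_mul_right _ (by omega)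
    have h2 : (a + 1) * (p - 1) = (p - 1) * a + (p - 1) := by ring
    omega
  have hrmD : rmD p r m = d := by
    rw [rmD_of_lt hrlt, hdiv.1, hdiv.2, hdd]
  constructor
  · -- membership: the punctured minimum weight is attained
    obtain ⟨f, hf0, hfred, hftot, hfs, hfcard⟩ := rm_upper p m a b ham hb s
    refine ⟨f, hf0, hfred, by rw [hab]; exact hftot, ?_⟩
    have hsplit : (Finset.univ.filter
          fun v : Fin m → ZMod p => v ≠ s ∧ MvPolynomial.eval v f ≠ 0)
        = (Finset.univ.filter
            fun v : Fin m → ZMod p => MvPolynomial.eval v f ≠ 0).erase s := by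
      ext v
      simp only [Finset.mem_filter, Finset.mem_univ, true_and, Finset.mem_erase]
    rw [hsplit, Finset.card_erase_of_mem
      (by simp only [Finset.mem_filter, Finset.mem_univ, true_and]; exact hfs),
      hfcard, hdd]
  · -- lower bound
    rintro n ⟨f, hf0, hfred, hftot, rfl⟩
    have hlow := rm_lower p m f hf0 hfred
    have h1 : rmD p r m ≤ rmD p f.totalDegree m := rmD_antitone p m hp2 hftot
    have hsub : (Finset.univ.filter
          fun v : Fin m → ZMod p => MvPolynomial.eval v f ≠ 0)
        ⊆ insert s (Finset.univ.filter
            fun v : Fin m → ZMod p => v ≠ s ∧ MvPolynomial.eval v f ≠ 0) := by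
      intro v hv
      simp only [Finset.mem_filter, Finset.mem_univ, true_and] at hv
      by_cases hvs : v = s
      · rw [hvs]; exact Finset.mem_insert_self _ _
      · exact Finset.mem_insert_of_mem
          (by simp only [Finset.mem_filter, Finset.mem_univ, true_and]; exact ⟨hvs, hv⟩)
    have h2 := Finset.card_le_card hsub
    have h3 := Finset.card_insert_le s (Finset.univ.filter
      fun v : Fin m → ZMod p => v ≠ s ∧ MvPolynomial.eval v f ≠ 0)
    omega
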